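/- For z ∈ ℂ with 0 < |z| < 1, the triangular ratio metric in the unit disk satisfies s_𝔻(z, -z) = |z|. -/

import Mathlib

theorem sD_z_neg_z (z : ℂ) (hz0 : z ≠ 0) (hz : ‖z‖ < 1) :
    sSup {r : ℝ | ∃ w : ℂ, ‖w‖ = 1 ∧
        r = ‖z - (-z)‖ / (‖z - w‖ + ‖w - (-z)‖)}
      = ‖z‖ := by
  have ha : (0:ℝ) < ‖z‖ := norm_pos_iff.mpr hz0
  have hnum : ‖z - (-z)‖ = 2 * ‖z‖ := by
    rw [sub_neg_eq_add, ← two_mul, norm_mul]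
    simp
  apply IsGreatest.csSup_eq
  constructor
  · refine ⟨((‖z‖ : ℂ))⁻¹ * z, ?_, ?_⟩
    · rw [norm_mul, norm_inv, Complex.norm_real, Real.norm_eq_abs, abs_of_pos ha]
      field_simp
    · have habs : ((‖z‖ : ℂ)) ≠ 0 := by
        simpa using ha.ne'
      have h1 : ‖z - ((‖z‖ : ℂ))⁻¹ * z‖ = 1 - ‖z‖ := by
        have : z - ((‖z‖ : ℂ))⁻¹ * z = z * (1 - ((‖z‖ : ℂ))⁻¹) := by ring
        rw [this, norm_mul]
        have : ‖1 - ((‖z‖ : ℂ))⁻¹‖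
            = (‖z‖)⁻¹ - 1 := by
          rw [← Complex.ofReal_one, ← Complex.ofReal_inv, ← Complex.ofReal_sub,
            Complex.norm_real, Real.norm_eq_abs, abs_of_nonpos]
          · ring
          · simp only [sub_nonpos]
            exact (one_le_inv₀ ha).mpr hz.le
        rw [this]
        field_simp
      have h2 : ‖((‖z‖ : ℂ))⁻¹ * z - (-z)‖ = 1 + ‖z‖ := by
        have : ((‖z‖ : ℂ))⁻¹ * z - (-z) = z * (1 + ((‖z‖ : ℂ))⁻¹) := by ring
        rw [this, norm_mul]
        have : ‖1 + ((‖z‖ : ℂ))⁻¹‖ = 1 + (‖z‖)⁻¹ := by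
          rw [← Complex.ofReal_one, ← Complex.ofReal_inv, ← Complex.ofReal_add,
            Complex.norm_real, Real.norm_eq_abs, abs_of_pos]
          positivity
        rw [this]
        field_simp
        ring
      rw [hnum, h1, h2]
      have : (1 - ‖z‖) + (1 + ‖z‖) = 2 := by ring
      rw [this]
      ring
  · rintro r ⟨w, hw, rfl⟩
    have h2 : (2:ℝ) ≤ ‖z - w‖ + ‖w - (-z)‖ := by
      have key : ‖(w - z) + (w - (-z))‖ = 2 := by
        rw [show (w - z) + (w - (-z)) = 2 * w by ring, norm_mul, hw]
        simp
      calc (2:ℝ) = ‖(w - z) + (w - (-z))‖ := key.symm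
        _ ≤ ‖w - z‖ + ‖w - (-z)‖ := norm_add_le _ _
        _ = ‖z - w‖ + ‖w - (-z)‖ := by rw [norm_sub_rev]
    rw [hnum]
    calc 2 * ‖z‖ / (‖z - w‖ + ‖w - (-z)‖)
        ≤ 2 * ‖z‖ / 2 := by
          apply div_le_div_of_nonneg_left (by positivity) (by norm_num) h2
      _ = ‖z‖ := by ring
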